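/- For x ∈ ℂ let L(x) denote the 2×2 complex matrix [[1 − x, −x],[0, 1 − x]] (the linear pencil L_A(x) = I − x·A for the Jordan block A = [[1,1],[0,1]]). Then the quantity ‖L(rx)⁻¹ · L(x)‖ is unbounded over r ∈ (0,1) and |x| < 1: for every M > 0 there exist r ∈ (0,1) and x ∈ ℂ with |x| < 1 such that L(rx) is invertible and ‖L(rx)⁻¹ · L(x)‖ > M. -/

import Mathlib

set_option synthInstance.maxHeartbeats 1000000
set_option maxHeartbeats 1000000

noncomputable def opNorm {m : Type*} [Fintype m] [DecidableEq m] (M : Matrix m m ℂ) : ℝ :=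
  ‖Matrix.toEuclideanCLM (𝕜 := ℂ) M‖

lemma entry_le_opNorm {m : Type*} [Fintype m] [DecidableEq m]
    (A : Matrix m m ℂ) (i j : m) : ‖A i j‖ ≤ opNorm A := by
  set T := Matrix.toEuclideanCLM (𝕜 := ℂ) A
  have h1 : T (EuclideanSpace.single j 1) =
      (WithLp.equiv 2 _).symm (A.mulVec (Pi.single j 1)) := by
    simpa using Matrix.toEuclideanCLM_toLp (𝕜 := ℂ) A (Pi.single j 1)
  have h2 : ‖A i j‖ ≤ ‖T (EuclideanSpace.single j 1)‖ := by
    have := norm_inner_le_norm (𝕜 := ℂ) (EuclideanSpace.single i (1:ℂ))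
      (T (EuclideanSpace.single j 1))
    rw [EuclideanSpace.inner_single_left] at this
    simp only [map_one, one_mul, EuclideanSpace.norm_single, norm_one, one_mul] at this
    calc ‖A i j‖ = ‖(T (EuclideanSpace.single j 1) : EuclideanSpace ℂ m) i‖ := by
          rw [h1]; simp [Matrix.mulVec_single]
      _ ≤ _ := this
  calc ‖A i j‖ ≤ ‖T (EuclideanSpace.single j 1)‖ := h2
    _ ≤ ‖T‖ * ‖EuclideanSpace.single j (1:ℂ)‖ := T.le_opNorm _
    _ = opNorm A := by simp [opNorm, T]

theorem jordan_block_pencil_ngn_unbounded :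
    let L : ℂ → Matrix (Fin 2) (Fin 2) ℂ := fun x => !![1 - x, -x; 0, 1 - x]
    ∀ M : ℝ, 0 < M → ∃ (r : ℝ) (x : ℂ), 0 < r ∧ r < 1 ∧ ‖x‖ < 1 ∧
      IsUnit (L ((r : ℂ) * x)) ∧ M < opNorm ((L ((r : ℂ) * x))⁻¹ * L x) := by
  intro L M hM
  set ε : ℝ := 1 / (16 * (M + 1)) with hεdef
  have hε0 : 0 < ε := by positivity
  have hε16 : ε ≤ 1 / 16 := by
    rw [hεdef]
    rw [div_le_div_iff₀ (by positivity) (by norm_num)]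
    nlinarith
  set t : ℝ := 1 - ε with htdef
  have ht0 : (15:ℝ)/16 ≤ t := by simp only [htdef]; linarith
  have ht1 : t < 1 := by simp only [htdef]; linarith
  have htpos : 0 < t := by linarith
  have hd : (0:ℝ) < 1 - t^2 := by nlinarith
  have hdc : (1:ℂ) - (t:ℂ) * t ≠ 0 := by
    have : ((1 - t^2 : ℝ) : ℂ) ≠ 0 := by exact_mod_cast hd.ne'
    push_cast at this
    convert this using 1
    ring
  refine ⟨t, (t:ℂ), htpos, ht1, ?_, ?_, ?_⟩
  · simpa [Complex.norm_real, abs_of_pos htpos] using ht1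
  · rw [Matrix.isUnit_iff_isUnit_det]
    simp only [L, Matrix.det_fin_two_of, isUnit_iff_ne_zero]
    intro h
    rw [mul_zero, sub_zero, mul_self_eq_zero] at h
    exact hdc h
  · clear_value t ε
    set c : ℂ := (t:ℂ) * t with hcdef
    set B : Matrix (Fin 2) (Fin 2) ℂ := !![(1-c)⁻¹, c / (1-c)^2; 0, (1-c)⁻¹] with hBdef
    have hinv : (L c)⁻¹ = B := by
      apply Matrix.inv_eq_right_inv
      ext i j
      fin_cases i <;> fin_cases j <;>
        simp [L, hBdef, Matrix.mul_apply, Fin.sum_univ_two, Matrix.one_apply] <;>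
        field_simp <;> ring
    have hdr : (1 - t^2 : ℝ) ≠ 0 := hd.ne'
    have hE : ((L c)⁻¹ * L (t:ℂ)) 0 1 = ((-(t * (1-t) / (1-t^2)^2) : ℝ) : ℂ) := by
      rw [hinv]
      simp only [L, hBdef, Matrix.mul_apply, Fin.sum_univ_two, Matrix.cons_val',
        Matrix.cons_val_zero, Matrix.cons_val_one, Matrix.head_cons, Matrix.head_fin_const,
        Matrix.empty_val', Matrix.cons_val_fin_one, Matrix.of_apply]
      rw [hcdef]
      have h2 : (1 - (t:ℂ)^2) ≠ 0 := by rw [sq]; exact hdc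
      push_cast
      field_simp [h2]
      ring
    have hεeq : ε * (16 * (M + 1)) = 1 := by
      rw [hεdef]; field_simp
    have h1 : M * ε ≤ 1/16 := by nlinarith
    have hkey : M < t * (1-t) / (1-t^2)^2 := by
      rw [lt_div_iff₀ (by positivity)]
      rw [htdef]
      calc M * (1 - (1-ε)^2)^2 = (M*ε) * (ε*(2-ε)^2) := by ring
        _ ≤ (1/16) * (ε*4) := by
            apply mul_le_mul h1 (by nlinarith) (by nlinarith) (by norm_num)
        _ = ε/4 := by ring
        _ < (1-ε) * (1 - (1-ε)) := by nlinarith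
    have hnorm : M < ‖((L c)⁻¹ * L (t:ℂ)) 0 1‖ := by
      rw [hE, Complex.norm_real, Real.norm_eq_abs, abs_neg,
        abs_of_nonneg (div_nonneg (mul_nonneg htpos.le (by linarith)) (by positivity))]
      exact hkey
    exact lt_of_lt_of_le hnorm (entry_le_opNorm _ 0 1)
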